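/- arXiv:2107.03154 — 8 statements merged into one kernel-verified Lean document; each statement's English description precedes it below -/
import Mathlib

section
/- Let (H_i)_{i ≥ 0} be a sequence of finitely generated subgroups of a free group such that H_i ≤ H_{i+1} and rank(H_i) ≥ rank(H_{i+1}) for each i, and let H = ∪_i H_i. Then rank(H) = lim_{i → ∞} rank(H_i), and moreover there exists m such that H = H_i for all i ≥ m. -/
open scoped Monoid.Coprod

variable {F : Type*}

/-- The canonical homomorphism `φ_g : H ∗ ⟨x⟩ → F` from the free product of `H` with an
infinite cyclic group (the free group on one generator `x`), restricting to the inclusion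
`H ↪ F` and sending `x` to `g`. -/
noncomputable def phi [Group F] (H : Subgroup F) (g : F) :
    (↥H ∗ FreeGroup Unit) →* F :=
  Monoid.Coprod.lift H.subtype (FreeGroup.lift fun _ => g)

/-- `g` depends on `H` (is algebraic over `H`) if `φ_g` is not injective. -/
def Depends [Group F] (H : Subgroup F) (g : F) : Prop :=
  ¬ Function.Injective (phi H g)

/-- `dep H`: the set of elements of `F` that depend on `H`. -/
def depSet [Group F] (H : Subgroup F) : Set F := {g | Depends H g}

/-- `Dep H`: the subgroup generated by the elements that depend on `H`. -/
noncomputable def DepSubgroup [Group F] (H : Subgroup F) : Subgroup F :=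
  Subgroup.closure (depSet H)

/-- The rank of a subgroup: the minimal cardinality of a generating set. For subgroups of
free groups this equals the cardinality of a free basis. -/
noncomputable def rk [Group F] (H : Subgroup F) : Cardinal :=
  ⨅ S : {S : Set F // Subgroup.closure S = H}, Cardinal.mk S.1

/-- `rk` is at most the cardinality of any generating set. -/
theorem rk_le_of_closure_eq [Group F] {H : Subgroup F} {S : Set F}
    (hS : Subgroup.closure S = H) : rk H ≤ Cardinal.mk S :=
  ciInf_le (OrderBot.bddBelow _) (⟨S, hS⟩ : {S : Set F // Subgroup.closure S = H})

/-- If `rk H` is bounded by a finite cardinal `c`, then `H` admits a generating set of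
cardinality at most `c`. -/
theorem exists_gen_le [Group F] {H : Subgroup F} {c : Cardinal} (hc : c < Cardinal.aleph0)
    (h : rk H ≤ c) : ∃ S : Set F, Subgroup.closure S = H ∧ Cardinal.mk S ≤ c := by
  by_contra hcon
  push_neg at hcon
  haveI : Nonempty {S : Set F // Subgroup.closure S = H} := ⟨⟨(H : Set F), Subgroup.closure_eq H⟩⟩
  have : Order.succ c ≤ rk H := by
    refine le_ciInf fun S => ?_
    exact Order.succ_le_of_lt (hcon S.1 S.2)
  exact absurd ((this.trans h)) (not_le.mpr (Order.lt_succ c))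

/-- A free group whose generators type is finite is finitely generated. -/
theorem isFreeGroup_fg (G : Type*) [Group G] [IsFreeGroup G]
    [Finite (IsFreeGroup.Generators G)] : Group.FG G := by
  rw [Group.fg_iff]
  refine ⟨Set.range (IsFreeGroup.of : IsFreeGroup.Generators G → G), ?_, Set.finite_range _⟩
  have : (Set.range (IsFreeGroup.of : IsFreeGroup.Generators G → G)) =
      ⇑(IsFreeGroup.mulEquiv G).toMonoidHom '' Set.range (FreeGroup.of) := by
    rw [← Set.range_comp]
    rfl
  rw [this, ← MonoidHom.map_closure, FreeGroup.closure_range_of]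
  exact Subgroup.map_top_of_surjective _ (IsFreeGroup.mulEquiv G).surjective

/-- an ascending chain of finitely generated subgroups of a free group with
nonincreasing ranks stabilizes: there is `m` such that the union equals `H i` for all
`i ≥ m`, and the rank of the union equals the (eventually constant) limit of the ranks. -/
theorem chain_stabilizes [Group F] [IsFreeGroup F] (H : ℕ → Subgroup F)
    (hFG : ∀ i, (H i).FG) (hmono : ∀ i, H i ≤ H (i + 1))
    (hrk : ∀ i, rk (H (i + 1)) ≤ rk (H i)) :
    ∃ m : ℕ, ∀ i, m ≤ i → (⨆ j, H j) = H i ∧ rk (⨆ j, H j) = rk (H i) := by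
  classical
  have hMono : Monotone H := monotone_nat_of_le_succ hmono
  have hdir : Directed (· ≤ ·) H := hMono.directed_le
  -- a uniform finite bound on ranks
  obtain ⟨S0, hS0⟩ := hFG 0
  have hfin0 : rk (H 0) < Cardinal.aleph0 := by
    refine lt_of_le_of_lt (rk_le_of_closure_eq hS0) ?_
    exact S0.finite_toSet.lt_aleph0
  obtain ⟨n, hn⟩ := Cardinal.lt_aleph0.mp hfin0
  have hle0 : ∀ i, rk (H i) ≤ rk (H 0) := by
    intro i
    induction i with
    | zero => exact le_rfl
    | succ k ih => exact (hrk k).trans ih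
  have hgen : ∀ i, ∃ S : Set F, Subgroup.closure S = H i ∧ Cardinal.mk S ≤ (n : Cardinal) := by
    intro i
    obtain ⟨S, h1, h2⟩ := exists_gen_le hfin0 (hle0 i)
    rw [hn] at h2
    exact ⟨S, h1, h2⟩
  set K : Subgroup F := ⨆ j, H j with hK
  have hmemK : ∀ x : F, x ∈ K ↔ ∃ i, x ∈ H i := fun x =>
    Subgroup.mem_iSup_of_directed hdir
  -- K is a free group (Nielsen–Schreier)
  -- show its generators type is finite
  haveI : Fact (Nat.Prime 2) := ⟨Nat.prime_two⟩
  have hfinGen : Finite (IsFreeGroup.Generators ↥K) := by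
    by_contra hinf
    rw [not_finite_iff_infinite] at hinf
    set emb : Fin (n + 1) ↪ IsFreeGroup.Generators ↥K :=
      (Fin.valEmbedding).trans (Infinite.natEmbedding _) with hemb
    -- the target vector space
    set V := Fin (n + 1) → ZMod 2 with hV
    set u : Fin (n + 1) → V := fun k => Pi.single k 1 with hu
    set g : IsFreeGroup.Generators ↥K → Multiplicative V :=
      fun b => Multiplicative.ofAdd (Function.extend emb u 0 b) with hg
    set f : ↥K →* Multiplicative V := IsFreeGroup.lift g with hf
    set x : Fin (n + 1) → ↥K := fun k => IsFreeGroup.of (emb k) with hx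
    have hfx : ∀ k, f (x k) = Multiplicative.ofAdd (u k) := by
      intro k
      rw [hf, hx, IsFreeGroup.lift_of]
      exact congrArg Multiplicative.ofAdd (emb.injective.extend_apply u 0 k)
    -- all the x k live in some H m
    have hxK : ∀ k, ∃ i, ((x k : F) ∈ H i) := fun k => (hmemK _).mp (x k).2
    choose ix hix using hxK
    set m : ℕ := Finset.univ.sup ix with hm
    have hxm : ∀ k, ((x k : F) ∈ H m) := fun k =>
      hMono (Finset.le_sup (Finset.mem_univ k)) (hix k)
    -- a small generating set of H m
    obtain ⟨s, hsgen, hscard⟩ := hgen m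
    have hsK : s ⊆ (K : Set F) := fun z hz => by
      rw [SetLike.mem_coe, hmemK]
      exact ⟨m, hsgen ▸ Subgroup.subset_closure hz⟩
    set st : Set ↥K := (K.subtype) ⁻¹' s with hst
    have himage : K.subtype '' st = s := by
      apply Set.Subset.antisymm
      · exact Set.image_preimage_subset _ _
      · intro z hz
        exact ⟨⟨z, hsK hz⟩, hz, rfl⟩
    have hxst : ∀ k, x k ∈ Subgroup.closure st := by
      intro k
      have hmap : Subgroup.map K.subtype (Subgroup.closure st) = H m := by
        rw [MonoidHom.map_closure, himage, hsgen]
      have : (x k : F) ∈ Subgroup.map K.subtype (Subgroup.closure st) := by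
        rw [hmap]; exact hxm k
      obtain ⟨y, hy, hyx⟩ := this
      have : y = x k := Subtype.ext hyx
      rwa [this] at hy
    -- push to the vector space
    set A : Set V := Multiplicative.toAdd '' (⇑f '' st) with hA
    set P : Subgroup (Multiplicative V) :=
      AddSubgroup.toSubgroup (Submodule.span (ZMod 2) A).toAddSubgroup with hP
    have hclP : Subgroup.closure (⇑f '' st) ≤ P := by
      refine Subgroup.closure_le P |>.mpr ?_
      intro b hb
      show Multiplicative.toAdd b ∈ Submodule.span (ZMod 2) A
      exact Submodule.subset_span ⟨b, hb, rfl⟩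
    have huspan : ∀ k, u k ∈ Submodule.span (ZMod 2) A := by
      intro k
      have hfk : f (x k) ∈ Subgroup.map f (Subgroup.closure st) :=
        Subgroup.mem_map_of_mem f (hxst k)
      rw [MonoidHom.map_closure] at hfk
      have := hclP hfk
      rw [hfx k] at this
      exact this
    -- span A is everything
    have hspan_top : Submodule.span (ZMod 2) A = ⊤ := by
      rw [eq_top_iff]
      have hb : ⊤ = Submodule.span (ZMod 2) (Set.range (Pi.basisFun (ZMod 2) (Fin (n + 1)))) :=
        (Module.Basis.span_eq _).symm
      rw [hb]
      refine Submodule.span_le.mpr ?_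
      rintro v ⟨k, rfl⟩
      rw [Pi.basisFun_apply]
      exact huspan k
    -- cardinality bounds (in ℕ, to avoid universe issues)
    have hsfin : s.Finite := Cardinal.lt_aleph0_iff_set_finite.mp
      (hscard.trans_lt (Cardinal.nat_lt_aleph0 n))
    have hsn : s.ncard ≤ n := by
      have h := Cardinal.toNat_le_toNat hscard (Cardinal.nat_lt_aleph0 n)
      rw [Cardinal.toNat_natCast] at h
      rw [← Nat.card_coe_set_eq]
      exact h
    have hstfin : st.Finite := Set.Finite.preimage (K.subtype_injective.injOn) hsfin
    have hstn : st.ncard = s.ncard := by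
      rw [← himage, Set.ncard_image_of_injective st K.subtype_injective]
    have hAfin : A.Finite := (hstfin.image ⇑f).image _
    have hAn : A.ncard ≤ n := by
      calc A.ncard ≤ (⇑f '' st).ncard := Set.ncard_image_le (hstfin.image _)
        _ ≤ st.ncard := Set.ncard_image_le hstfin
        _ = s.ncard := hstn
        _ ≤ n := hsn
    haveI : Fintype ↑A := hAfin.fintype
    have h1 : Module.finrank (ZMod 2) V ≤ A.toFinset.card := by
      have := finrank_span_le_card (R := ZMod 2) A
      rwa [hspan_top, finrank_top] at this
    have h2 : Module.finrank (ZMod 2) V = n + 1 := by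
      show Module.finrank (ZMod 2) (Fin (n + 1) → ZMod 2) = n + 1
      rw [Module.finrank_pi]
      simp
    rw [h2, ← Set.ncard_eq_toFinset_card' A] at h1
    omega
  -- K is finitely generated
  haveI := hfinGen
  have hKfg : K.FG := (Group.fg_iff_subgroup_fg K).mp (isFreeGroup_fg ↥K)
  obtain ⟨T, hT⟩ := hKfg
  have hTmem : ∀ t ∈ T, ∃ i, t ∈ H i := by
    intro t ht
    exact (hmemK t).mp (hT ▸ Subgroup.subset_closure ht)
  choose jx hjx using hTmem
  set m : ℕ := T.attach.sup (fun t => jx t.1 t.2) with hm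
  have hTHm : (T : Set F) ⊆ H m := by
    intro t ht
    exact hMono (Finset.le_sup (f := fun t : {x // x ∈ T} => jx t.1 t.2)
      (Finset.mem_attach T ⟨t, ht⟩)) (hjx t ht)
  have hKle : K ≤ H m := by
    rw [← hT]
    exact (Subgroup.closure_le _).mpr hTHm
  refine ⟨m, fun i hi => ?_⟩
  have : K = H i := le_antisymm (hKle.trans (hMono hi)) (le_iSup H i)
  exact ⟨this, by rw [this]⟩
end

section
/- Let H ≤ G ≤ K be subgroups of a free group F. If H is dependence-closed in G and G is dependence-closed in K, then H is dependence-closed in K. -/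
open scoped Monoid.Coprod
open Monoid Function

section MapInj

universe u

variable {A B C : Type u} [Group A] [Group B] [Group C]

/-- The `Bool`-indexed family `{B, A ∗ C}` used for the amalgamated product. -/
def depFam (A B C : Type u) [Group A] [Group B] [Group C] : Bool → Type u :=
  fun b => cond b B (A ∗ C)

instance : ∀ b, Group (depFam A B C b)
  | true => inferInstanceAs (Group B)
  | false => inferInstanceAs (Group (A ∗ C))

/-- The legs of the amalgamation diagram: `f : A → B` and `inl : A → A ∗ C`. -/
def depFamHom (f : A →* B) (C : Type u) [Group C] : ∀ b, A →* depFam A B C b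
  | true => f
  | false => Coprod.inl

theorem coprod_map_id_injective_aux (f : A →* B) (hf : Injective f) :
    Injective (Coprod.map f (MonoidHom.id C)) := by
  set φ := depFamHom f C with hφdef
  have hφ : ∀ b, Injective (φ b) := by
    intro b; cases b
    · exact Coprod.inl_injective
    · exact hf
  let e : PushoutI φ →* B ∗ C :=
    PushoutI.lift (fun b => match b with
        | true => Coprod.inl
        | false => Coprod.map f (MonoidHom.id C))
      (Coprod.inl.comp f)
      (by intro b; cases b
          · exact Coprod.map_comp_inl f (MonoidHom.id C)
          · rfl)
  let e' : B ∗ C →* PushoutI φ :=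
    Coprod.lift (show B →* PushoutI φ from PushoutI.of (φ := φ) true) ((PushoutI.of (φ := φ) false).comp Coprod.inr)
  have h1 : e'.comp e = MonoidHom.id _ := by
    apply PushoutI.hom_ext_nonempty
    intro b; cases b
    · -- b = false : maps out of A ∗ C
      apply Coprod.hom_ext
      · ext a
        show e' (e (PushoutI.of false (Coprod.inl a))) = PushoutI.of false (Coprod.inl a)
        have h2 : e (PushoutI.of false (Coprod.inl a)) = Coprod.inl (f a) := by
          simp [e, PushoutI.lift_of, Monoid.Coprod.map_apply_inl, Monoid.Coprod.map_apply_inr]; rfl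
        rw [h2]
        show PushoutI.of true (f a) = PushoutI.of (φ := φ) false (Coprod.inl a)
        have h3 := PushoutI.of_apply_eq_base φ true a
        have h4 := PushoutI.of_apply_eq_base φ false a
        exact h3.trans h4.symm
      · ext c
        show e' (e (PushoutI.of false (Coprod.inr c))) = PushoutI.of false (Coprod.inr c)
        have h2 : e (PushoutI.of false (Coprod.inr c)) = Coprod.inr c := by
          simp [e, PushoutI.lift_of, Monoid.Coprod.map_apply_inl, Monoid.Coprod.map_apply_inr]; rfl
        rw [h2]
        rfl
    · ext b
      show e' (e (PushoutI.of true b)) = PushoutI.of true b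
      have h2 : e (PushoutI.of true b) = Coprod.inl b := by
        simp [e, PushoutI.lift_of, Monoid.Coprod.map_apply_inl, Monoid.Coprod.map_apply_inr]; rfl
      rw [h2]; rfl
  have he : Injective e := by
    have : Function.LeftInverse e' e := fun x => by
      simpa using DFunLike.congr_fun h1 x
    exact this.injective
  have hmap : ∀ x, Coprod.map f (MonoidHom.id C) x = e (PushoutI.of false x) := by
    intro x
    simp [e, PushoutI.lift_of, Monoid.Coprod.map_apply_inl, Monoid.Coprod.map_apply_inr]; rfl
  intro x y hxy
  apply PushoutI.of_injective hφ false
  apply he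
  rw [← hmap, ← hmap, hxy]

end MapInj

section General

universe u v w

/-- Free product of an injective group homomorphism with the identity is injective. -/
theorem coprod_map_id_injective {A : Type u} {B : Type v} {C : Type w}
    [Group A] [Group B] [Group C] (f : A →* B) (hf : Function.Injective f) :
    Function.Injective (Monoid.Coprod.map f (MonoidHom.id C)) := by
  let A' := ULift.{max u v w} A
  let B' := ULift.{max u v w} B
  let C' := ULift.{max u v w} C
  let eA : A' ≃* A := MulEquiv.ulift
  let eB : B' ≃* B := MulEquiv.ulift
  let eC : C' ≃* C := MulEquiv.ulift
  let f' : A' →* B' := (eB.symm.toMonoidHom.comp f).comp eA.toMonoidHom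
  have hf' : Function.Injective f' := by
    intro x y h
    apply eA.injective
    apply hf
    apply eB.symm.injective
    exact h
  have key := coprod_map_id_injective_aux (C := C') f' hf'
  have hcomm : (MulEquiv.coprodCongr eB eC).toMonoidHom.comp
      ((Monoid.Coprod.map f' (MonoidHom.id C')).comp
        (MulEquiv.coprodCongr eA eC).symm.toMonoidHom)
      = Monoid.Coprod.map f (MonoidHom.id C) := by
    apply Monoid.Coprod.hom_ext
    · ext a
      simp [f', MulEquiv.coprodCongr, eA, eB, eC]
    · ext c
      simp [f', MulEquiv.coprodCongr, eA, eB, eC]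
  rw [← hcomm]
  exact (MulEquiv.coprodCongr eB eC).injective.comp
    (key.comp (MulEquiv.coprodCongr eA eC).symm.injective)

end General

open scoped Monoid.Coprod

variable {F : Type*}

/-- `H` is dependence-closed in `G`: no element of `G \ H` depends on `H`. -/
def DepClosedIn [Group F] (H G : Subgroup F) : Prop :=
  ∀ g : F, g ∈ G → g ∉ H → ¬ Depends H g

/-- transitivity of being dependence-closed. -/
theorem depClosedIn_trans [Group F] [IsFreeGroup F] (H G K : Subgroup F)
    (hHG : H ≤ G) (hGK : G ≤ K)
    (h₁ : DepClosedIn H G) (h₂ : DepClosedIn G K) : DepClosedIn H K := by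
  intro g hgK hgH
  by_cases hG : g ∈ G
  · exact h₁ g hG hgH
  · have hninj := h₂ g hgK hG
    have hinj : Function.Injective (phi G g) := by
      by_contra h
      exact hninj h
    intro hdep
    apply hdep
    have hcomp : (phi G g).comp
        (Monoid.Coprod.map (Subgroup.inclusion hHG) (MonoidHom.id (FreeGroup Unit)))
        = phi H g := by
      apply Monoid.Coprod.hom_ext
      · ext ⟨h, hh⟩
        simp [phi, Monoid.Coprod.lift_apply_inl, Subgroup.inclusion]
      · ext u
        simp [phi]
    rw [← hcomp]
    exact hinj.comp (coprod_map_id_injective _ (Subgroup.inclusion_injective hHG))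
end

section
/- Let H ≤ K and G ≤ L be subgroups of a free group F. If H is dependence-closed in K and G is dependence-closed in L, then H ∩ G is dependence-closed in K ∩ L. -/
open scoped Monoid.Coprod

variable {F : Type*}


open scoped Monoid.Coprod
open Monoid Function

namespace DepAux

/-! ### Injectivity of the induced map on `CoprodI` -/

variable {ι : Type*} {M : ι → Type*} {N : ι → Type*}
  [∀ i, Monoid (M i)] [∀ i, Monoid (N i)]

/-- Map a reduced word through a family of injective homomorphisms. -/
def wordMap (f : ∀ i, M i →* N i) (hf : ∀ i, Function.Injective (f i))
    (w : CoprodI.Word M) : CoprodI.Word N where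
  toList := w.toList.map fun l => ⟨l.1, f l.1 l.2⟩
  ne_one := by
    intro l hl
    simp only [List.mem_map] at hl
    rcases hl with ⟨a, ha, rfl⟩
    intro h
    exact w.ne_one a ha ((hf a.1) (by simpa using h))
  chain_ne := by
    have := w.chain_ne
    rw [List.isChain_map]
    exact this.imp (fun a b h => by simpa using h)

theorem wordMap_injective (f : ∀ i, M i →* N i) (hf : ∀ i, Function.Injective (f i)) :
    Function.Injective (wordMap f hf) := by
  intro w₁ w₂ h
  apply CoprodI.Word.ext
  have h' := congrArg CoprodI.Word.toList h
  simp only [wordMap] at h'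
  refine List.map_injective_iff.mpr ?_ h'
  rintro ⟨i, m⟩ ⟨j, m'⟩ hl
  dsimp only at hl
  obtain ⟨h1, hm⟩ := Sigma.ext_iff.mp hl
  dsimp only at h1 hm
  subst h1
  simp [hf i (eq_of_heq hm)]

theorem prod_wordMap (f : ∀ i, M i →* N i) (hf : ∀ i, Function.Injective (f i))
    (w : CoprodI.Word M) :
    (wordMap f hf w).prod = CoprodI.lift (fun i => (CoprodI.of).comp (f i)) w.prod := by
  simp only [CoprodI.Word.prod, wordMap, List.map_map, map_list_prod]
  congr 1

theorem coprodI_lift_injective (f : ∀ i, M i →* N i) (hf : ∀ i, Function.Injective (f i)) :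
    Function.Injective (CoprodI.lift (fun i => (CoprodI.of).comp (f i))) := by
  classical
  intro x y hxy
  have hx : x = (CoprodI.Word.equiv (M := M) x).prod := (CoprodI.Word.equiv.left_inv x).symm
  have hy : y = (CoprodI.Word.equiv (M := M) y).prod := (CoprodI.Word.equiv.left_inv y).symm
  rw [hx, hy, ← prod_wordMap f hf, ← prod_wordMap f hf] at hxy
  have := CoprodI.Word.equiv.symm.injective (a₁ := wordMap f hf (CoprodI.Word.equiv x))
    (a₂ := wordMap f hf (CoprodI.Word.equiv y)) (by simpa [CoprodI.Word.equiv] using hxy)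
  rw [hx, hy, wordMap_injective f hf this]

end DepAux

namespace DepAux

section Bridge

universe u v

variable (M : Type u) (N : Type v) [Group M] [Group N]

/-- The Bool-indexed family `⟨ULift M, ULift N⟩`. -/
abbrev fam : Bool → Type (max u v) := fun b => cond b (ULift.{v} M) (ULift.{u} N)

instance famGroup : ∀ b, Group (fam M N b) := fun b => by
  cases b <;> dsimp [fam] <;> infer_instance

/-- From the binary coproduct to the indexed coproduct. -/
noncomputable def toI : M ∗ N →* Monoid.CoprodI (fam M N) :=
  Coprod.lift
    ((CoprodI.of (M := fam M N) (i := true)).comp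
      (MulEquiv.ulift (α := M)).symm.toMonoidHom)
    ((CoprodI.of (M := fam M N) (i := false)).comp
      (MulEquiv.ulift (α := N)).symm.toMonoidHom)

/-- From the indexed coproduct to the binary coproduct. -/
noncomputable def ofI : Monoid.CoprodI (fam M N) →* M ∗ N :=
  CoprodI.lift (fun b => Bool.rec (motive := fun b => fam M N b →* M ∗ N)
    ((Coprod.inr (M := M)).comp (MulEquiv.ulift (α := N)).toMonoidHom)
    ((Coprod.inl (N := N)).comp (MulEquiv.ulift (α := M)).toMonoidHom) b)

theorem ofI_comp_toI : (ofI M N).comp (toI M N) = MonoidHom.id _ := by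
  refine Coprod.hom_ext ?_ ?_ <;> ext x <;>
    · simp only [toI, ofI, MonoidHom.comp_apply, Coprod.lift_apply_inl, Coprod.lift_apply_inr,
        MonoidHom.id_apply]
      rw [CoprodI.lift_of]
      rfl

theorem toI_comp_ofI : (toI M N).comp (ofI M N) = MonoidHom.id _ := by
  refine CoprodI.ext_hom _ _ (fun i => ?_)
  cases i <;> ext x <;>
    · simp only [ofI, toI, MonoidHom.comp_apply, MonoidHom.id_apply]
      rw [CoprodI.lift_of]
      rfl

theorem toI_injective : Function.Injective (toI M N) := by
  intro a b hab
  have := congrArg (ofI M N) hab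
  simpa [← MonoidHom.comp_apply, ofI_comp_toI] using this

theorem ofI_injective : Function.Injective (ofI M N) := by
  intro a b hab
  have := congrArg (toI M N) hab
  simpa [← MonoidHom.comp_apply, toI_comp_ofI] using this

end Bridge

section MapInj

universe u v

variable {M M' : Type u} {N N' : Type v} [Group M] [Group N] [Group M'] [Group N']

/-- The family of maps between the Bool-indexed families. -/
def famMap (f : M →* M') (g : N →* N') :
    ∀ b, fam M N b →* fam M' N' b := fun b =>
  Bool.rec (motive := fun b => fam M N b →* fam M' N' b)
    ((MulEquiv.ulift (α := N')).symm.toMonoidHom.comp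
      (g.comp (MulEquiv.ulift (α := N)).toMonoidHom))
    ((MulEquiv.ulift (α := M')).symm.toMonoidHom.comp
      (f.comp (MulEquiv.ulift (α := M)).toMonoidHom)) b

theorem famMap_injective (f : M →* M') (g : N →* N')
    (hf : Function.Injective f) (hg : Function.Injective g) :
    ∀ b, Function.Injective (famMap f g b) := fun b => by
  cases b
  · exact ((MulEquiv.ulift (α := N')).symm.injective.comp hg).comp
      (MulEquiv.ulift (α := N)).injective
  · exact ((MulEquiv.ulift (α := M')).symm.injective.comp hf).comp
      (MulEquiv.ulift (α := M)).injective

theorem coprod_map_eq (f : M →* M') (g : N →* N') :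
    Coprod.map f g =
      (ofI M' N').comp
        ((CoprodI.lift fun b => (CoprodI.of).comp (famMap f g b)).comp (toI M N)) := by
  refine Coprod.hom_ext ?_ ?_ <;> ext x <;>
    · simp only [toI, ofI, famMap, MonoidHom.comp_apply, Coprod.lift_apply_inl,
        Coprod.lift_apply_inr, Coprod.map_apply_inl, Coprod.map_apply_inr]
      rw [CoprodI.lift_of, MonoidHom.comp_apply, CoprodI.lift_of]
      rfl

theorem coprod_map_injective (f : M →* M') (g : N →* N')
    (hf : Function.Injective f) (hg : Function.Injective g) :
    Function.Injective (Coprod.map f g) := by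
  rw [coprod_map_eq f g]
  exact (ofI_injective M' N').comp
    ((coprodI_lift_injective _ (famMap_injective f g hf hg)).comp (toI_injective M N))

end MapInj

end DepAux


theorem phi_injective_mono [Group F] {H' H : Subgroup F} (h : H' ≤ H) (g : F)
    (hinj : Function.Injective (phi H g)) : Function.Injective (phi H' g) := by
  have key : phi H' g = (phi H g).comp
      (Monoid.Coprod.map (Subgroup.inclusion h) (MonoidHom.id (FreeGroup Unit))) := by
    refine Monoid.Coprod.hom_ext ?_ ?_
    · ext x
      simp [phi, Monoid.Coprod.lift_apply_inl, Monoid.Coprod.map_apply_inl,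
        Subgroup.inclusion]
    · ext x
      simp [phi, Monoid.Coprod.lift_apply_inr, Monoid.Coprod.map_apply_inr]
  rw [key]
  exact hinj.comp (DepAux.coprod_map_injective _ _ (Subgroup.inclusion_injective h)
    Function.injective_id)

theorem Depends.mono [Group F] {H' H : Subgroup F} (h : H' ≤ H) {g : F}
    (hd : Depends H' g) : Depends H g :=
  fun hinj => hd (phi_injective_mono h g hinj)

/-- intersections of dependence-closed pairs are dependence-closed. -/
theorem depClosedIn_inf [Group F] [IsFreeGroup F] (H K G L : Subgroup F)
    (hHK : H ≤ K) (hGL : G ≤ L)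
    (h₁ : DepClosedIn H K) (h₂ : DepClosedIn G L) :
    DepClosedIn (H ⊓ G) (K ⊓ L) := by
  rintro g ⟨hgK, hgL⟩ hgn hdep
  by_cases hH : g ∈ H
  · by_cases hG : g ∈ G
    · exact hgn ⟨hH, hG⟩
    · exact h₂ g hgL hG (hdep.mono inf_le_right)
  · exact h₁ g hgK hH (hdep.mono inf_le_left)
end

section
/- Let H be a dependence-closed subgroup of a free group F. Then H is malnormal in F: for every g ∈ F \ H, the intersection g H g⁻¹ ∩ H is trivial. -/
open scoped Monoid.Coprod

variable {F : Type*}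

section Aux

variable {G : Type*} [Group G]

/-- Action of `G` on `G ⊕ G`: act on the left summand by left multiplication. -/
noncomputable def leftPerm : G →* Equiv.Perm (G ⊕ G) :=
  (Equiv.Perm.sumCongrHom G G).comp ((MulAction.toPermHom G G).prod 1)

lemma leftPerm_apply (g a : G) : leftPerm g (Sum.inl a) = Sum.inl (g * a) := rfl

lemma leftPerm_apply_inr (g a : G) : leftPerm g (Sum.inr a) = Sum.inr a := rfl

/-- The key nontriviality fact in the coproduct: a conjugate of a nontrivial `inl h`
by `inr x` is never of the form `inl k`. -/
lemma conj_ne_inl {H : Type*} [Group H] (h k : H) (hh : h ≠ 1) :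
    (Monoid.Coprod.inr (FreeGroup.of ()) * Monoid.Coprod.inl h *
      (Monoid.Coprod.inr (FreeGroup.of ()))⁻¹ : H ∗ FreeGroup Unit) ≠
      Monoid.Coprod.inl k := by
  intro heq
  have := congrArg
    (Monoid.Coprod.lift (leftPerm (G := H))
      (FreeGroup.lift fun _ => Equiv.sumComm H H)) heq
  simp only [map_mul, map_inv, Monoid.Coprod.lift_apply_inl,
    Monoid.Coprod.lift_apply_inr, FreeGroup.lift_apply_of] at this
  have := congrArg (fun e : Equiv.Perm (H ⊕ H) => e (Sum.inr 1)) this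
  simp only [Equiv.Perm.mul_apply] at this
  rw [show ((Equiv.sumComm H H : Equiv.Perm (H ⊕ H)))⁻¹ = Equiv.sumComm H H from rfl] at this
  simp [leftPerm_apply, leftPerm_apply_inr] at this
  exact hh this

/-- If some nontrivial `h ∈ H` is conjugated into `H` by `g`, then `g` depends on `H`. -/
lemma depends_of_conj [Group F] (H : Subgroup F) (g : F) (h : F) (hhH : h ∈ H)
    (hh1 : h ≠ 1) (hc : g * h * g⁻¹ ∈ H) : Depends H g := by
  intro hinj
  have key : phi H g
      (Monoid.Coprod.inr (FreeGroup.of ()) * Monoid.Coprod.inl (⟨h, hhH⟩ : H) *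
        (Monoid.Coprod.inr (FreeGroup.of ()))⁻¹) =
      phi H g (Monoid.Coprod.inl (⟨g * h * g⁻¹, hc⟩ : H)) := by
    simp only [phi, map_mul, map_inv, Monoid.Coprod.lift_apply_inl,
      Monoid.Coprod.lift_apply_inr, FreeGroup.lift_apply_of, Subgroup.coe_subtype]
  exact conj_ne_inl (⟨h, hhH⟩ : H) (⟨g * h * g⁻¹, hc⟩ : H)
    (by simpa [Subtype.ext_iff] using hh1) (hinj key)

end Aux

/-- a dependence-closed subgroup is malnormal: for every `g ∉ H`,
`gHg⁻¹ ∩ H = 1`. -/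
theorem depClosed_malnormal [Group F] [IsFreeGroup F] (H : Subgroup F)
    (hH : DepSubgroup H = H) :
    ∀ g : F, g ∉ H → Subgroup.map (MulAut.conj g).toMonoidHom H ⊓ H = ⊥ := by
  intro g hg
  rw [eq_bot_iff]
  intro y hy
  rcases hy with ⟨⟨h, hhH, rfl⟩, hyH⟩
  simp only [MulEquiv.coe_toMonoidHom, MulAut.conj_apply] at hyH ⊢
  by_contra hy1
  have hh1 : h ≠ 1 := by
    rintro rfl
    simp at hy1
  have hdep : Depends H g := depends_of_conj H g h hhH hh1 hyH
  have : g ∈ DepSubgroup H := Subgroup.subset_closure hdep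
  rw [hH] at this
  exact hg this
end

section
/- Let H be a dependence-closed subgroup of a free group F. Then H is pure (root-closed): if g ∈ F and gⁿ ∈ H for some integer n ≠ 0, then g ∈ H. -/
open scoped Monoid.Coprod

variable {F : Type*}

/-- a dependence-closed subgroup is pure (root-closed): if `gⁿ ∈ H` for some
integer `n ≠ 0`, then `g ∈ H`. -/
theorem depClosed_pure [Group F] [IsFreeGroup F] (H : Subgroup F)
    (hH : DepSubgroup H = H) :
    ∀ g : F, ∀ n : ℤ, n ≠ 0 → g ^ n ∈ H → g ∈ H := by
  intro g n hn hgn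
  have hdep : Depends H g := by
    intro hinj
    have h1 : phi H g (Monoid.Coprod.inl ⟨g ^ n, hgn⟩) =
        phi H g (Monoid.Coprod.inr (FreeGroup.of () ^ n)) := by
      simp only [phi, Monoid.Coprod.lift_apply_inl, Monoid.Coprod.lift_apply_inr,
        Subgroup.coe_subtype, map_zpow, FreeGroup.lift_apply_of]
    have h2 := hinj h1
    -- project to the FreeGroup Unit factor
    have h3 : (Monoid.Coprod.lift (1 : ↥H →* FreeGroup Unit)
        (MonoidHom.id (FreeGroup Unit))) (Monoid.Coprod.inl (⟨g ^ n, hgn⟩ : ↥H)) =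
        (Monoid.Coprod.lift (1 : ↥H →* FreeGroup Unit)
        (MonoidHom.id (FreeGroup Unit))) (Monoid.Coprod.inr (FreeGroup.of () ^ n)) := by
      rw [h2]
    simp only [Monoid.Coprod.lift_apply_inl, Monoid.Coprod.lift_apply_inr,
      MonoidHom.one_apply, MonoidHom.id_apply] at h3
    -- map to Multiplicative ℤ
    have h4 := congrArg (FreeGroup.lift fun _ : Unit => (Multiplicative.ofAdd (1 : ℤ))) h3
    rw [map_one, map_zpow, FreeGroup.lift_apply_of] at h4
    have h5 : (n : ℤ) • (1 : ℤ) = 0 := by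
      have := congrArg Multiplicative.toAdd h4.symm
      simpa [← ofAdd_zsmul] using this
    simp at h5
    exact hn h5
  have : g ∈ DepSubgroup H := Subgroup.subset_closure hdep
  rwa [hH] at this
end

section
/- Let H be a dependence-closed subgroup of a free group F and let G ≤ F be a subgroup with H ≤ G and H ≠ G. Then the index of H in G is infinite. -/
open scoped Monoid.Coprod

variable {F : Type*}

lemma depends_of_pow_mem [Group F] (H : Subgroup F) (g : F) (k : ℕ) (hk : 0 < k)
    (hm : g ^ k ∈ H) : Depends H g := by
  intro hinj
  set w : ↑H ∗ FreeGroup Unit :=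
    Monoid.Coprod.inr (FreeGroup.of () ^ k) * Monoid.Coprod.inl (⟨g ^ k, hm⟩ : H)⁻¹ with hwdef
  have hw : phi H g w = 1 := by
    simp [phi, w]
  have h1 : w = 1 := hinj (by rw [hw, map_one])
  have h2 := congrArg ((FreeGroup.lift fun _ => (Multiplicative.ofAdd (1 : ℤ))).comp
    (Monoid.Coprod.snd)) h1
  simp [w, ← ofAdd_nsmul] at h2
  omega

/-- a proper extension of a dependence-closed subgroup has infinite index
(in Mathlib, `relindex = 0` encodes infinite index). -/
theorem depClosed_infinite_index [Group F] [IsFreeGroup F] (H G : Subgroup F)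
    (hH : DepSubgroup H = H) (hHG : H ≤ G) (hne : H ≠ G) :
    H.relIndex G = 0 := by
  by_contra hidx
  apply hne
  refine le_antisymm hHG fun g hg => ?_
  obtain ⟨n, hn0, _, hmem⟩ := Subgroup.exists_pow_mem_of_relIndex_ne_zero hidx hg
  have : g ∈ depSet H := depends_of_pow_mem H g n hn0 hmem.1
  rw [← hH]
  exact Subgroup.subset_closure this
end

section
/- Let H and G be dependence-closed subgroups of a free group F. Then H ∩ G is dependence-closed. -/
open scoped Monoid.Coprod

variable {F : Type*}

/-! ### Auxiliary lemmas -/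

open Monoid

section CoprodIInj

/-- A family of injective homomorphisms induces an injective homomorphism on `CoprodI`. -/
theorem coprodI_lift_comp_of_injective {ι : Type*} {M N : ι → Type*}
    [∀ i, Group (M i)] [∀ i, Group (N i)] (f : ∀ i, M i →* N i)
    (hf : ∀ i, Function.Injective (f i)) :
    Function.Injective (CoprodI.lift fun i => (CoprodI.of (M := N) (i := i)).comp (f i)) := by
  classical
  set Φ := CoprodI.lift fun i => (CoprodI.of (M := N) (i := i)).comp (f i) with hΦ
  rw [injective_iff_map_eq_one]
  intro x hx
  set w : CoprodI.Word M := CoprodI.Word.equiv x with hw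
  have hprod : w.prod = x := by
    have h0 : CoprodI.Word.equiv.symm (CoprodI.Word.equiv x) = x :=
      CoprodI.Word.equiv.symm_apply_apply x
    exact h0
  have hne : ∀ l ∈ w.toList.map (fun l : Σ i, M i => (⟨l.1, f l.1 l.2⟩ : Σ i, N i)),
      l.2 ≠ 1 := by
    intro l hl
    simp only [List.mem_map] at hl
    obtain ⟨a, ha, rfl⟩ := hl
    exact fun h => w.ne_one a ha ((injective_iff_map_eq_one (f a.1)).1 (hf a.1) a.2 h)
  have hchain : (w.toList.map (fun l : Σ i, M i => (⟨l.1, f l.1 l.2⟩ : Σ i, N i))).Chain'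
      (fun l l' => l.1 ≠ l'.1) := by
    rw [List.Chain', List.isChain_map]
    exact w.chain_ne
  set w' : CoprodI.Word N := ⟨_, hne, hchain⟩ with hw'
  have hprod' : w'.prod = Φ x := by
    rw [← hprod]
    show (List.map (fun l => CoprodI.of l.snd)
        (w.toList.map fun l : Σ i, M i => (⟨l.1, f l.1 l.2⟩ : Σ i, N i))).prod
      = Φ (List.map (fun l => CoprodI.of l.snd) w.toList).prod
    rw [map_list_prod, List.map_map, List.map_map]
    refine congrArg List.prod ?_
    refine List.map_congr_left fun a _ => ?_
    simp [hΦ]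
  have hempty : w' = CoprodI.Word.empty := by
    have h1 : CoprodI.Word.equiv.symm w' = CoprodI.Word.equiv.symm CoprodI.Word.empty := by
      show w'.prod = (CoprodI.Word.empty : CoprodI.Word N).prod
      rw [hprod', hx, CoprodI.Word.prod_empty]
    exact CoprodI.Word.equiv.symm.injective h1
    
  have hnil : w.toList = [] := by
    have := congrArg CoprodI.Word.toList hempty
    simpa [hw'] using this
  have : w = CoprodI.Word.empty := CoprodI.Word.ext hnil
  rw [← hprod, this, CoprodI.Word.prod_empty]

universe u v

/-- The `Bool`-indexed family encoding a binary coproduct. -/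
def BF (A : Type u) (B : Type v) : Bool → Type (max u v) :=
  fun b => Bool.rec (ULift.{u} B) (ULift.{v} A) b

instance BF.group (A : Type u) (B : Type v) [Group A] [Group B] : ∀ b, Group (BF A B b) :=
  fun b => Bool.rec (inferInstanceAs (Group (ULift.{u} B)))
    (inferInstanceAs (Group (ULift.{v} A))) b

variable {A A' : Type u} {B : Type v} [Group A] [Group A'] [Group B]

/-- The canonical homomorphism from the binary coproduct to the indexed coproduct. -/
def toI : (A ∗ B) →* CoprodI (BF A B) :=
  Coprod.lift
    ((CoprodI.of (M := BF A B) (i := true)).comp (MulEquiv.ulift.symm.toMonoidHom))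
    ((CoprodI.of (M := BF A B) (i := false)).comp (MulEquiv.ulift.symm.toMonoidHom))

/-- The canonical homomorphism back. -/
def fromI : CoprodI (BF A B) →* (A ∗ B) :=
  CoprodI.lift fun b => Bool.rec (motive := fun b => BF A B b →* A ∗ B)
    ((Coprod.inr (M := A) (N := B)).comp (MulEquiv.ulift.toMonoidHom))
    ((Coprod.inl (M := A) (N := B)).comp (MulEquiv.ulift.toMonoidHom)) b

theorem toI_injective : Function.Injective (toI : A ∗ B →* _) := by
  have h : (fromI.comp (toI : A ∗ B →* _)) = MonoidHom.id _ := by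
    apply Coprod.hom_ext
    · ext x
      simp only [MonoidHom.comp_apply, MonoidHom.id_apply, toI, fromI,
        Coprod.lift_apply_inl, Coprod.lift_apply_inr, CoprodI.lift_of]
      rfl
    · ext x
      simp only [MonoidHom.comp_apply, MonoidHom.id_apply, toI, fromI,
        Coprod.lift_apply_inl, Coprod.lift_apply_inr, CoprodI.lift_of]
      rfl
  have : Function.LeftInverse fromI (toI : A ∗ B →* _) := fun x => by
    have := DFunLike.congr_fun h x
    simpa using this
  exact this.injective

theorem coprod_map_id_injective_s13 (f : A →* A') (hf : Function.Injective f) :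
    Function.Injective (Coprod.map f (MonoidHom.id B)) := by
  let φ : ∀ b, BF A B b →* BF A' B b := fun b =>
    Bool.rec (motive := fun b => BF A B b →* BF A' B b)
      (MonoidHom.id (ULift.{u} B))
      ((MulEquiv.ulift.symm.toMonoidHom).comp (f.comp MulEquiv.ulift.toMonoidHom)) b
  have hφ : ∀ b, Function.Injective (φ b) := by
    intro b
    cases b
    · exact fun x y hxy => hxy
    · intro x y hxy
      have hxy' : MulEquiv.ulift.symm (f (MulEquiv.ulift x))
          = MulEquiv.ulift.symm (f (MulEquiv.ulift y)) := hxy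
      exact MulEquiv.ulift.injective (hf (MulEquiv.ulift.symm.injective hxy'))
  have hcomm : (CoprodI.lift fun b => (CoprodI.of (M := BF A' B) (i := b)).comp (φ b)).comp
      (toI : A ∗ B →* _) = (toI : A' ∗ B →* _).comp (Coprod.map f (MonoidHom.id B)) := by
    apply Coprod.hom_ext
    · ext x
      simp only [MonoidHom.comp_apply, toI, φ, Coprod.lift_apply_inl, Coprod.lift_apply_inr,
        CoprodI.lift_of, Coprod.map_apply_inl, Coprod.map_apply_inr, MonoidHom.id_apply]
      rfl
    · ext x
      simp only [MonoidHom.comp_apply, toI, φ, Coprod.lift_apply_inl, Coprod.lift_apply_inr,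
        CoprodI.lift_of, Coprod.map_apply_inl, Coprod.map_apply_inr, MonoidHom.id_apply]
      rfl
  have h1 : Function.Injective
      (((CoprodI.lift fun b => (CoprodI.of (M := BF A' B) (i := b)).comp (φ b)).comp
        (toI : A ∗ B →* _))) :=
    (coprodI_lift_comp_of_injective φ hφ).comp toI_injective
  rw [hcomm] at h1
  intro x y hxy
  apply h1
  simp only [MonoidHom.comp_apply, hxy]

end CoprodIInj

theorem depends_mono [Group F] {K H : Subgroup F} (hKH : K ≤ H) {g : F}
    (h : Depends K g) : Depends H g := by
  intro hinj
  apply h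
  have key : (phi H g).comp
      (Coprod.map (Subgroup.inclusion hKH) (MonoidHom.id (FreeGroup Unit))) = phi K g := by
    apply Coprod.hom_ext
    · ext x
      simp [phi, Subgroup.inclusion]
    · ext x
      simp [phi]
  rw [← key]
  exact hinj.comp (coprod_map_id_injective_s13 _ (Subgroup.inclusion_injective hKH))

theorem mem_depSet_of_mem [Group F] {H : Subgroup F} {h : F} (hh : h ∈ H) : h ∈ depSet H := by
  intro hinj
  have h1 : phi H h (Coprod.inr (FreeGroup.of ()) * (Coprod.inl (⟨h, hh⟩ : H))⁻¹) = 1 := by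
    simp [phi]
  have h2 : Coprod.inr (FreeGroup.of ()) * (Coprod.inl (⟨h, hh⟩ : H))⁻¹ = 1 :=
    hinj (h1.trans (map_one (phi H h)).symm)
  have h3 := congrArg (Coprod.lift (1 : ↥H →* FreeGroup Unit) (MonoidHom.id (FreeGroup Unit))) h2
  simp at h3

/-- the intersection of two dependence-closed subgroups is
dependence-closed. -/
theorem depClosed_inter [Group F] [IsFreeGroup F] (H G : Subgroup F)
    (hH : DepSubgroup H = H) (hG : DepSubgroup G = G) :
    DepSubgroup (H ⊓ G) = H ⊓ G := by
  apply le_antisymm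
  · rw [DepSubgroup, Subgroup.closure_le]
    intro g hg
    have hgH : g ∈ H := by
      rw [← hH]
      exact Subgroup.subset_closure (depends_mono inf_le_left hg)
    have hgG : g ∈ G := by
      rw [← hG]
      exact Subgroup.subset_closure (depends_mono inf_le_right hg)
    exact ⟨hgH, hgG⟩
  · intro x hx
    exact Subgroup.subset_closure (mem_depSet_of_mem hx)
end

section
/- Let F be a free group and H ≤ F a subgroup. If H is a nontrivial normal subgroup of F, or if H has finite index in F, then Dep(H) = F, i.e., the subgroup generated by the elements of F that depend on H is all of F. -/
open scoped Monoid.Coprod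
open Monoid

variable {F : Type*}

section Aux

/-- A conjugate `y a y⁻¹` of a letter from one factor by a nontrivial letter of another factor
is never a letter of the first factor, in a free product. -/
theorem coprodI_conj_ne_of {ι : Type*} {G : ι → Type*} [∀ i, Group (G i)]
    {i j : ι} (hij : i ≠ j) {a : G i} (ha : a ≠ 1) {y : G j} (hy : y ≠ 1) (c : G i) :
    CoprodI.of y * CoprodI.of a * (CoprodI.of y)⁻¹ ≠ CoprodI.of c := by
  classical
  intro heq
  have hy' : y⁻¹ ≠ 1 := inv_ne_one.mpr hy
  let w : CoprodI.NeWord G j j :=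
    .append (.append (.singleton y hy) hij.symm (.singleton a ha)) hij (.singleton y⁻¹ hy')
  have hinj : Function.Injective (CoprodI.Word.prod : CoprodI.Word G → CoprodI G) :=
    CoprodI.Word.equiv.symm.injective
  have hwprod : w.toWord.prod = CoprodI.of y * CoprodI.of a * (CoprodI.of y)⁻¹ := by
    have := w.prod
    show w.prod = _
    simp [w, CoprodI.NeWord.append_prod, CoprodI.NeWord.prod_singleton]
  by_cases hc : c = 1
  · have h1 : w.toWord.prod = (CoprodI.Word.empty : CoprodI.Word G).prod := by
      rw [hwprod, heq, hc, map_one, CoprodI.Word.prod_empty]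
    have := congrArg (fun u : CoprodI.Word G => u.toList.length) (hinj h1)
    simp [CoprodI.NeWord.toWord, w] at this
  · have h1 : w.toWord.prod = (CoprodI.NeWord.singleton c hc).toWord.prod := by
      rw [hwprod, heq]
      exact (CoprodI.NeWord.prod_singleton c hc).symm
    have := congrArg (fun u : CoprodI.Word G => u.toList.length) (hinj h1)
    simp [CoprodI.NeWord.toWord, w] at this

universe u v

def fam (M : Type u) (N : Type v) : Bool → Type (max u v) :=
  fun b => Bool.rec (ULift.{u} N) (ULift.{v} M) b

instance famGroup {M : Type u} {N : Type v} [Group M] [Group N] : ∀ b, Group (fam M N b)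
  | true => inferInstanceAs (Group (ULift M))
  | false => inferInstanceAs (Group (ULift N))

/-- The homomorphism `M →* ULift M`. -/
def upHom (M : Type u) [Group M] : M →* ULift.{v} M where
  toFun a := ULift.up a
  map_one' := rfl
  map_mul' _ _ := rfl

theorem coprod_conj_ne_inl {M : Type u} {N : Type v} [Group M] [Group N]
    {a : M} (ha : a ≠ 1) {y : N} (hy : y ≠ 1) (c : M) :
    Coprod.inr y * Coprod.inl a * (Coprod.inr y)⁻¹ ≠ (Coprod.inl c : M ∗ N) := by
  intro heq
  let Φ : M ∗ N →* CoprodI (fam M N) :=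
    Coprod.lift ((CoprodI.of (M := fam M N) (i := true)).comp (upHom M))
      ((CoprodI.of (M := fam M N) (i := false)).comp (upHom N))
  have ha' : (ULift.up a : fam M N true) ≠ 1 := fun hh => ha (congrArg ULift.down hh)
  have hy' : (ULift.up y : fam M N false) ≠ 1 := fun hh => hy (congrArg ULift.down hh)
  have key := coprodI_conj_ne_of (G := fam M N) (i := true) (j := false) (by decide)
    ha' hy' (ULift.up c)
  apply key
  have := congrArg Φ heq
  simp only [map_mul, map_inv, Φ, Coprod.lift_apply_inl, Coprod.lift_apply_inr,
    MonoidHom.comp_apply] at this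
  simp only [upHom, MonoidHom.coe_mk, OneHom.coe_mk] at this
  exact this

theorem coprod_inr_ne_inl {M N : Type*} [Group M] [Group N]
    {y : N} (hy : y ≠ 1) (c : M) : (Coprod.inr y : M ∗ N) ≠ Coprod.inl c := by
  intro heq
  have := congrArg (Coprod.snd : M ∗ N →* N) heq
  simp at this
  exact hy this

theorem freeGroup_of_pow_ne_one {n : ℕ} (hn : n ≠ 0) : (FreeGroup.of () : FreeGroup Unit) ^ n ≠ 1 := by
  intro heq
  have := congrArg (FreeGroup.lift fun _ : Unit => (Multiplicative.ofAdd (1 : ℤ))) heq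
  simp [map_pow, FreeGroup.lift_apply_of, ← ofAdd_nsmul] at this
  exact hn this

end Aux

/-- if `H` is a nontrivial normal subgroup of `F`, or has finite index in
`F`, then `Dep H = F`. -/
theorem DepSubgroup_eq_top [Group F] [IsFreeGroup F] (H : Subgroup F)
    (h : (H ≠ ⊥ ∧ H.Normal) ∨ H.index ≠ 0) : DepSubgroup H = ⊤ := by
  have hofne : (FreeGroup.of () : FreeGroup Unit) ≠ 1 := by
    have := freeGroup_of_pow_ne_one (n := 1) one_ne_zero
    rwa [pow_one] at this
  have hdep : ∀ g : F, Depends H g := by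
    intro g
    rcases h with ⟨hne, hnorm⟩ | hidx
    · obtain ⟨h0, h0H, h0ne⟩ : ∃ x ∈ H, x ≠ 1 := by
        by_contra hcon
        push_neg at hcon
        exact hne ((Subgroup.eq_bot_iff_forall H).mpr hcon)
      have haH : (⟨h0, h0H⟩ : H) ≠ 1 := fun hh => h0ne (congrArg Subtype.val hh)
      have hkH : g * h0 * g⁻¹ ∈ H := hnorm.conj_mem h0 h0H g
      intro hinj
      apply coprod_conj_ne_inl haH hofne (⟨g * h0 * g⁻¹, hkH⟩ : H)
      apply hinj
      simp [phi, map_mul, map_inv, Monoid.Coprod.lift_apply_inl, Monoid.Coprod.lift_apply_inr,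
        FreeGroup.lift_apply_of]
    · obtain ⟨n, hn0, -, hgn⟩ := Subgroup.exists_pow_mem_of_index_ne_zero hidx g
      intro hinj
      apply coprod_inr_ne_inl (freeGroup_of_pow_ne_one hn0.ne') (⟨g ^ n, hgn⟩ : H)
      apply hinj
      simp [phi, map_pow, Monoid.Coprod.lift_apply_inl, Monoid.Coprod.lift_apply_inr,
        FreeGroup.lift_apply_of]
  have huniv : depSet H = Set.univ := Set.eq_univ_of_forall hdep
  rw [DepSubgroup, huniv, Subgroup.closure_univ]
end
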